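/- Let a and l be real numbers with a ≥ l ≥ 1. Then 0 ≤ (a − l)·ψ′(a) < 1 + 1/l. -/

import Mathlib

/-- The digamma function `ψ`, i.e. the derivative of `x ↦ log Γ(x)`. -/
noncomputable def digamma (x : ℝ) : ℝ := deriv (fun y : ℝ => Real.log (Real.Gamma y)) x

/-- The trigamma function `ψ′`, i.e. the derivative of the digamma function. -/
noncomputable def trigamma (x : ℝ) : ℝ := deriv digamma x

open Real Filter Topology Set


lemma hasDerivAt_logGamma {x : ℝ} (hx : 0 < x) :
    HasDerivAt (fun y : ℝ => Real.log (Real.Gamma y)) (digamma x) x := by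
  have h : DifferentiableAt ℝ (fun y : ℝ => Real.log (Real.Gamma y)) x := by
    refine ((Real.differentiableAt_Gamma ?_).log (Real.Gamma_ne_zero ?_)) <;>
      exact fun m => (lt_of_le_of_lt (neg_nonpos.mpr m.cast_nonneg) hx).ne'
  exact h.hasDerivAt

lemma digamma_rec {x : ℝ} (hx : 0 < x) : digamma (x + 1) = digamma x + 1 / x := by
  have h1 : HasDerivAt (fun y : ℝ => Real.log (Real.Gamma (y + 1)))
      (digamma (x + 1) * 1) x :=
    (hasDerivAt_logGamma (by linarith)).comp x ((hasDerivAt_id x).add_const 1)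
  have h2 : HasDerivAt (fun y : ℝ => Real.log (Real.Gamma y) + Real.log y)
      (digamma x + 1 / x) x := by
    rw [one_div]
    exact (hasDerivAt_logGamma hx).add (Real.hasDerivAt_log hx.ne')
  have h3 : (fun y : ℝ => Real.log (Real.Gamma y) + Real.log y)
      =ᶠ[𝓝 x] (fun y : ℝ => Real.log (Real.Gamma (y + 1))) := by
    filter_upwards [eventually_gt_nhds hx] with y hy
    rw [Real.Gamma_add_one hy.ne', Real.log_mul hy.ne' (Real.Gamma_pos_of_pos hy).ne',
      add_comm]
  have h4 := h2.congr_of_eventuallyEq h3.symm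
  simpa using (h1.unique h4)

lemma digamma_le_log {x : ℝ} (hx : 0 < x) : digamma x ≤ Real.log x := by
  have h := Real.convexOn_log_Gamma.le_slope_of_hasDerivAt (Set.mem_Ioi.2 hx)
    (Set.mem_Ioi.2 (by linarith : (0:ℝ) < x + 1)) (by linarith) (hasDerivAt_logGamma hx)
  rw [slope_def_field] at h
  simp only [Function.comp] at h
  rw [Real.Gamma_add_one hx.ne', Real.log_mul hx.ne' (Real.Gamma_pos_of_pos hx).ne'] at h
  refine h.trans (le_of_eq ?_)
  field_simp
  ring

lemma log_le_digamma {x : ℝ} (hx : 0 < x) : Real.log x ≤ digamma (x + 1) := by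
  have h := Real.convexOn_log_Gamma.slope_le_of_hasDerivAt (Set.mem_Ioi.2 hx)
    (Set.mem_Ioi.2 (by linarith : (0:ℝ) < x + 1)) (by linarith)
    (hasDerivAt_logGamma (by linarith))
  rw [slope_def_field] at h
  simp only [Function.comp] at h
  rw [Real.Gamma_add_one hx.ne', Real.log_mul hx.ne' (Real.Gamma_pos_of_pos hx).ne'] at h
  refine le_trans (le_of_eq ?_) h
  field_simp
  ring

lemma digamma_add_nat {x : ℝ} (hx : 0 < x) (n : ℕ) :
    digamma (x + n) = digamma x + ∑ k ∈ Finset.range n, 1 / (x + k) := by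
  induction n with
  | zero => simp
  | succ n ih =>
    have hxn : 0 < x + n := by positivity
    have : (x + (n + 1) : ℝ) = (x + n) + 1 := by push_cast; ring
    push_cast
    rw [show x + ((n:ℝ) + 1) = (x + n) + 1 by ring, digamma_rec hxn, ih, Finset.sum_range_succ]
    ring

lemma tendsto_S {x : ℝ} (hx : 0 < x) :
    Tendsto (fun n : ℕ => Real.log (x + n) - ∑ k ∈ Finset.range n, 1 / (x + k))
      atTop (𝓝 (digamma x)) := by
  set S : ℕ → ℝ := fun n => Real.log (x + n) - ∑ k ∈ Finset.range n, 1 / (x + k) with hS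
  have hup : ∀ n : ℕ, digamma x ≤ S n := by
    intro n
    have hxn : 0 < x + n := by positivity
    have h1 : digamma (x + n) ≤ Real.log (x + n) := digamma_le_log hxn
    rw [digamma_add_nat hx n] at h1
    simp only [hS]; linarith
  have hdown : ∀ n : ℕ, 1 ≤ n → S n ≤ digamma x + 1 / (x + n - 1) := by
    intro n hn
    have hxn1 : (0:ℝ) < x + n - 1 := by
      have : (1:ℝ) ≤ n := by exact_mod_cast hn
      linarith
    have h1 : Real.log (x + n - 1) ≤ digamma (x + n) := by
      have := log_le_digamma hxn1
      rw [show x + n - 1 + 1 = x + n by ring] at this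
      exact this
    rw [digamma_add_nat hx n] at h1
    have h2 : Real.log (x + n) - Real.log (x + n - 1) ≤ 1 / (x + n - 1) := by
      rw [← Real.log_div (by positivity) hxn1.ne']
      have := Real.log_le_sub_one_of_pos (show (0:ℝ) < (x + n) / (x + n - 1) by positivity)
      refine this.trans (le_of_eq ?_)
      field_simp
      ring
    simp only [hS]; linarith
  have hlim : Tendsto (fun n : ℕ => 1 / (x + n - 1)) atTop (𝓝 0) := by
    simp only [one_div]
    apply Tendsto.comp tendsto_inv_atTop_zero
    apply tendsto_atTop_add_const_right
    exact tendsto_atTop_add_const_left _ _ (tendsto_natCast_atTop_atTop (R := ℝ))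
  refine tendsto_of_tendsto_of_tendsto_of_le_of_le' (f := S) (g := fun _ : ℕ => digamma x)
    (h := fun n : ℕ => digamma x + 1 / (x + n - 1)) tendsto_const_nhds ?_ ?_ ?_
  · simpa using tendsto_const_nhds.add hlim
  · exact Eventually.of_forall hup
  · filter_upwards [eventually_ge_atTop 1] with n hn using hdown n hn

lemma min_mul_le_add {x : ℝ} (hx : 0 < x) (k : ℕ) : min x 1 * (1 + k) ≤ x + k := by
  have hk : (0:ℝ) ≤ k := Nat.cast_nonneg k
  rcases le_total x 1 with h | h
  · rw [min_eq_left h]; nlinarith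
  · rw [min_eq_right h]; nlinarith

lemma summable_base : Summable (fun k : ℕ => 1 / (1 + (k:ℝ))^2) := by
  have h := Real.summable_one_div_nat_pow.2 (by norm_num : 1 < 2)
  have h2 := (summable_nat_add_iff (f := fun n : ℕ => 1 / (n:ℝ)^2) 1).2 h
  refine h2.congr fun k => ?_
  push_cast; ring_nf

lemma summable_inv_sq {x : ℝ} (hx : 0 < x) : Summable (fun k : ℕ => 1 / (x + k)^2) := by
  have hc : 0 < min x 1 := lt_min hx one_pos
  refine Summable.of_nonneg_of_le (fun k => by positivity)
    (fun k => ?_) (summable_base.mul_left (1 / (min x 1)^2))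
  have h1 := min_mul_le_add hx k
  have h2 : (0:ℝ) < 1 + k := by positivity
  have h3 : 0 < x + (k:ℝ) := by positivity
  rw [div_mul_div_comm, one_mul]
  apply div_le_div_of_nonneg_left one_pos.le (by positivity)
  calc (min x 1)^2 * (1+(k:ℝ))^2 = (min x 1 * (1+k))^2 := by ring
    _ ≤ (x + k)^2 := pow_le_pow_left₀ (by positivity) h1 2

lemma summable_diff {x : ℝ} (hx : 0 < x) :
    Summable (fun k : ℕ => 1 / (1 + (k:ℝ)) - 1 / (x + k)) := by
  have hc : 0 < min x 1 := lt_min hx one_pos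
  refine Summable.of_norm_bounded (summable_base.mul_left (|x - 1| / min x 1)) fun k => ?_
  have h1 := min_mul_le_add hx k
  have h2 : (0:ℝ) < 1 + k := by positivity
  have h3 : 0 < x + (k:ℝ) := by positivity
  have key : 1 / (1 + (k:ℝ)) - 1 / (x + k) = (x - 1) / ((1 + k) * (x + k)) := by
    field_simp
    ring
  have hb : min x 1 * (1 + (k:ℝ))^2 ≤ (1 + k) * (x + k) := by nlinarith
  rw [key, norm_div, Real.norm_eq_abs, Real.norm_eq_abs, abs_of_pos (mul_pos h2 h3)]
  calc |x - 1| / ((1 + (k:ℝ)) * (x + k)) ≤ |x - 1| / (min x 1 * (1 + k)^2) :=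
        div_le_div_of_nonneg_left (abs_nonneg _) (by positivity) hb
    _ = |x - 1| / min x 1 * (1 / (1 + k)^2) := by
        rw [div_mul_div_comm, mul_one]

lemma tendsto_log_ratio {x : ℝ} (hx : 0 < x) :
    Tendsto (fun n : ℕ => Real.log (x + n) - Real.log (1 + n)) atTop (𝓝 0) := by
  have h1 : Tendsto (fun n : ℕ => (1:ℝ) + n) atTop atTop :=
    tendsto_atTop_add_const_left _ _ (tendsto_natCast_atTop_atTop (R := ℝ))
  have h2 : Tendsto (fun n : ℕ => (x - 1) / (1 + n)) atTop (𝓝 0) :=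
    Tendsto.div_atTop tendsto_const_nhds h1
  have h3 : Tendsto (fun n : ℕ => (x + n) / (1 + n)) atTop (𝓝 1) := by
    have : ∀ n : ℕ, (x + n) / (1 + n) = 1 + (x - 1) / (1 + n) := by
      intro n
      have : (0:ℝ) < 1 + n := by positivity
      field_simp
      ring
    simpa [this] using tendsto_const_nhds.add h2
  have h4 : Tendsto (fun n : ℕ => Real.log ((x + n) / (1 + n))) atTop (𝓝 0) := by
    have := (Real.continuousAt_log one_ne_zero).tendsto.comp h3
    simpa [Function.comp_def] using this
  refine h4.congr fun n => ?_
  rw [Real.log_div (by positivity) (by positivity)]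

lemma digamma_eq {x : ℝ} (hx : 0 < x) :
    digamma x = digamma 1 + ∑' k : ℕ, (1 / (1 + (k:ℝ)) - 1 / (x + k)) := by
  have h1 := (tendsto_S hx).sub (tendsto_S one_pos)
  have h2 := (tendsto_log_ratio hx).add ((summable_diff hx).hasSum.tendsto_sum_nat)
  rw [zero_add] at h2
  have heq : (fun n : ℕ => (Real.log (x + n) - ∑ k ∈ Finset.range n, 1 / (x + k)) -
      (Real.log (1 + n) - ∑ k ∈ Finset.range n, 1 / (1 + (k:ℝ)))) =
      fun n : ℕ => (Real.log (x + n) - Real.log (1 + n)) +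
        ∑ k ∈ Finset.range n, (1 / (1 + (k:ℝ)) - 1 / (x + k)) := by
    funext n
    rw [Finset.sum_sub_distrib]
    ring
  rw [heq] at h1
  have := tendsto_nhds_unique h1 h2
  linarith

set_option maxHeartbeats 1000000 in
lemma hasDerivAt_digamma {x : ℝ} (hx : 0 < x) :
    HasDerivAt digamma (∑' k : ℕ, 1 / (x + k)^2) x := by
  have hx2 : 0 < x / 2 := half_pos hx
  have hD : HasDerivAt (fun z : ℝ => ∑' k : ℕ, (1 / (1 + (k:ℝ)) - 1 / (z + k)))
      (∑' k : ℕ, 1 / (x + k)^2) x := by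
    refine hasDerivAt_tsum_of_isPreconnected
      (g := fun (k : ℕ) (z : ℝ) => 1 / (1 + (k:ℝ)) - 1 / (z + k))
      (g' := fun (k : ℕ) (y : ℝ) => 1 / (y + k)^2)
      (u := fun k : ℕ => 1 / (x/2 + k)^2)
      (summable_inv_sq hx2) isOpen_Ioi (convex_Ioi _).isPreconnected
      (fun k y hy => ?_) (fun k y hy => ?_) (Set.mem_Ioi.2 (half_lt_self hx))
      (summable_diff hx) (Set.mem_Ioi.2 (half_lt_self hx))
    · have hyk : y + (k:ℝ) ≠ 0 := by
        have h0 : 0 < y := lt_trans hx2 hy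
        positivity
      have h := (((hasDerivAt_id y).add_const (k:ℝ)).inv hyk).const_sub (1 / (1 + (k:ℝ)))
      simp only [one_div] at h ⊢
      convert h using 1
      · rfl
      · simp [neg_div]
    · have h1 : x / 2 < y := hy
      have h2 : (0:ℝ) < x/2 + k := by positivity
      have h3 : (0:ℝ) < y + k := by linarith
      rw [Real.norm_eq_abs, abs_of_pos (by positivity)]
      apply div_le_div_of_nonneg_left one_pos.le (by positivity)
      apply pow_le_pow_left₀ h2.le (by linarith) 2
  have heq : (fun z : ℝ => digamma 1 + ∑' k : ℕ, (1 / (1 + (k:ℝ)) - 1 / (z + k)))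
      =ᶠ[𝓝 x] digamma := by
    filter_upwards [eventually_gt_nhds hx] with z hz
    exact (digamma_eq hz).symm
  exact (hD.const_add (digamma 1)).congr_of_eventuallyEq heq.symm

lemma trigamma_eq {x : ℝ} (hx : 0 < x) : trigamma x = ∑' k : ℕ, 1 / (x + k)^2 :=
  (hasDerivAt_digamma hx).deriv

lemma tendsto_one_div_add {a : ℝ} (ha : 0 < a) :
    Tendsto (fun n : ℕ => 1 / (a + n)) atTop (𝓝 0) := by
  simp only [one_div]
  apply Tendsto.comp tendsto_inv_atTop_zero
  exact tendsto_atTop_add_const_left _ _ (tendsto_natCast_atTop_atTop (R := ℝ))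

lemma hasSum_telescope {a : ℝ} (ha : 0 < a) :
    HasSum (fun k : ℕ => 1 / (a + k) - 1 / (a + (k + 1 : ℕ))) (1 / a) := by
  set f : ℕ → ℝ := fun k => 1 / (a + k) with hf
  have hnn : ∀ k : ℕ, 0 ≤ f k - f (k + 1) := by
    intro k
    have h1 : (0:ℝ) < a + k := by positivity
    have h2 : (a:ℝ) + k ≤ a + (k + 1 : ℕ) := by push_cast; linarith
    simp only [hf]
    have := one_div_le_one_div_of_le h1 h2
    linarith
  rw [hasSum_iff_tendsto_nat_of_nonneg hnn]
  have heq : ∀ n : ℕ, ∑ k ∈ Finset.range n, (f k - f (k + 1)) = f 0 - f n :=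
    fun n => Finset.sum_range_sub' f n
  simp only [heq]
  have : Tendsto (fun n : ℕ => f n) atTop (𝓝 0) := tendsto_one_div_add ha
  simpa [hf] using tendsto_const_nhds.sub this

set_option maxHeartbeats 1000000 in
lemma trigamma_le {a : ℝ} (ha : 0 < a) : trigamma a ≤ 1 / a + 1 / a ^ 2 := by
  rw [trigamma_eq ha]
  have hsum := summable_inv_sq ha
  rw [hsum.tsum_eq_zero_add]
  have hshift : Summable (fun k : ℕ => 1 / (a + (k + 1 : ℕ)) ^ 2) :=
    (summable_nat_add_iff 1).2 hsum
  have htel := hasSum_telescope ha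
  have hle : ∑' k : ℕ, 1 / (a + (k + 1 : ℕ)) ^ 2 ≤ 1 / a := by
    rw [← htel.tsum_eq]
    refine Summable.tsum_le_tsum (fun k => ?_) hshift htel.summable
    have h1 : (0:ℝ) < a + k := by positivity
    have h2 : (0:ℝ) < a + (k + 1 : ℕ) := by positivity
    have h3 : (a:ℝ) + (k + 1 : ℕ) = (a + k) + 1 := by push_cast; ring
    rw [h3] at h2 ⊢
    rw [div_sub_div _ _ h1.ne' h2.ne', one_mul, mul_one]
    rw [div_le_div_iff₀ (by positivity) (by positivity)]
    nlinarith
  have h0 : (1:ℝ) / (a + (0:ℕ)) ^ 2 = 1 / a ^ 2 := by norm_num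
  rw [h0]
  linarith

lemma trigamma_nonneg {a : ℝ} (ha : 0 < a) : 0 ≤ trigamma a := by
  rw [trigamma_eq ha]
  exact tsum_nonneg fun k => by positivity

/-- If `a ≥ l ≥ 1`, then `0 ≤ (a − l)·ψ′(a) < 1 + 1/l`. -/
theorem trigamma_term_bound (a l : ℝ) (hl : 1 ≤ l) (hal : l ≤ a) :
    0 ≤ (a - l) * trigamma a ∧ (a - l) * trigamma a < 1 + 1 / l := by
  have hl0 : (0:ℝ) < l := lt_of_lt_of_le one_pos hl
  have ha : (0:ℝ) < a := lt_of_lt_of_le hl0 hal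
  constructor
  · exact mul_nonneg (by linarith) (trigamma_nonneg ha)
  · calc (a - l) * trigamma a ≤ (a - l) * (1 / a + 1 / a ^ 2) :=
          mul_le_mul_of_nonneg_left (trigamma_le ha) (by linarith)
      _ < 1 + 1 / l := by
          rw [show 1 / a + 1 / a ^ 2 = (a + 1) / a ^ 2 by field_simp,
            show (1:ℝ) + 1 / l = (l + 1) / l by field_simp,
            mul_div_assoc', div_lt_div_iff₀ (by positivity) hl0]
          nlinarith [mul_le_mul_of_nonneg_left hl (mul_nonneg ha.le hl0.le), sq_nonneg l,
            sq_nonneg a, mul_pos ha hl0]
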